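/- Let p ∈ (0,1) and q̂ > 0. Let K ≥ 1 be such that e^{−q̂ Σ_{k=1}^{n−1}(k+1)^{−p}} ≤ n^{−p} for all n ≥ K, and set C := max_{1 ≤ i ≤ K} i^p e^{−q̂ Σ_{k=1}^{i−1}(k+1)^{−p}}. Then for all n ≥ 1 the sequence c_n := Σ_{i=0}^{n−1} (i+1)^{−2p} e^{−2q̂ Σ_{k=i+1}^{n−1}(k+1)^{−p}} satisfies c_n ≤ (C e^{q̂}/q̂) n^{−p}. -/

import Mathlib

open scoped BigOperators
open Real Set


lemma g_hasDeriv (p : ℝ) {x : ℝ} (hx : 0 < x) :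
    HasDerivAt (fun x : ℝ => (Real.log (x+1) - Real.log x) * (x+1)^p)
      (((x+1)⁻¹ - x⁻¹) * (x+1)^p
        + (Real.log (x+1) - Real.log x) * (p * (x+1)^(p-1))) x := by
  have hx1 : (0:ℝ) < x + 1 := by linarith
  have h1 : HasDerivAt (fun x : ℝ => Real.log (x+1)) ((x+1)⁻¹) x := by
    have := (Real.hasDerivAt_log hx1.ne').comp x ((hasDerivAt_id x).add_const 1)
    simpa [Function.comp_def] using this
  have h2 : HasDerivAt Real.log x⁻¹ x := Real.hasDerivAt_log hx.ne'
  have h3 : HasDerivAt (fun x : ℝ => (x+1)^p) (p * (x+1)^(p-1)) x := by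
    have := (Real.hasDerivAt_rpow_const (p := p) (Or.inl hx1.ne')).comp x
      ((hasDerivAt_id x).add_const 1)
    simpa [Function.comp_def] using this
  exact (h1.sub h2).mul h3

lemma g_anti (p : ℝ) (hp0 : 0 < p) (hp1 : p < 1) :
    AntitoneOn (fun x : ℝ => (Real.log (x+1) - Real.log x) * (x+1)^p) (Set.Ici 1) := by
  apply antitoneOn_of_deriv_nonpos (convex_Ici 1)
  · intro x hx
    exact (g_hasDeriv p (lt_of_lt_of_le zero_lt_one hx)).continuousAt.continuousWithinAt
  · intro x hx
    rw [interior_Ici] at hx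
    exact (g_hasDeriv p (lt_trans zero_lt_one hx)).differentiableAt.differentiableWithinAt
  · intro x hx
    rw [interior_Ici] at hx
    have hx0 : (0:ℝ) < x := lt_trans zero_lt_one hx
    have hx1 : (0:ℝ) < x + 1 := by linarith
    rw [(g_hasDeriv p hx0).deriv]
    have hE : (0:ℝ) < (x+1)^(p-1) := Real.rpow_pos_of_pos hx1 _
    have hEp : (x+1)^p = (x+1)^(p-1) * (x+1) := by
      rw [← Real.rpow_add_one hx1.ne' (p-1)]; ring_nf
    have hlog : Real.log (x+1) - Real.log x ≤ x⁻¹ := by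
      have h := Real.log_le_sub_one_of_pos (x := (x+1)/x) (by positivity)
      rw [Real.log_div hx1.ne' hx0.ne'] at h
      have : (x+1)/x - 1 = x⁻¹ := by field_simp; ring
      linarith [this ▸ h]
    have hlog0 : 0 ≤ Real.log (x+1) - Real.log x := by
      have := Real.log_le_log hx0 (by linarith : x ≤ x + 1)
      linarith
    have key : (Real.log (x+1) - Real.log x) * (p * (x+1)^(p-1))
        ≤ x⁻¹ * (x+1)^(p-1) := by
      have : (Real.log (x+1) - Real.log x) * p ≤ x⁻¹ * 1 := by
        nlinarith
      calc (Real.log (x+1) - Real.log x) * (p * (x+1)^(p-1))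
          = ((Real.log (x+1) - Real.log x) * p) * (x+1)^(p-1) := by ring
        _ ≤ (x⁻¹ * 1) * (x+1)^(p-1) := by
            exact mul_le_mul_of_nonneg_right this hE.le
        _ = x⁻¹ * (x+1)^(p-1) := by ring
    have hfirst : ((x+1)⁻¹ - x⁻¹) * (x+1)^p = - (x⁻¹ * (x+1)^(p-1)) := by
      rw [hEp]; field_simp; ring
    rw [hfirst]; linarith


namespace Stmt7Aux

noncomputable def w (p : ℝ) (k : ℕ) : ℝ := ((k:ℝ)+1)^(-p)
noncomputable def s (p : ℝ) (j : ℕ) : ℝ := ∑ k ∈ Finset.Icc 1 j, w p k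
noncomputable def f (p qh : ℝ) (m : ℕ) : ℝ := (m:ℝ)^p * Real.exp (-qh * s p (m-1))
noncomputable def ρ (p qh : ℝ) (j : ℕ) : ℝ :=
  (((j:ℝ)+1)/j)^p * Real.exp (-qh * w p j)

variable {p qh : ℝ}

lemma w_pos (p : ℝ) (k : ℕ) : 0 < w p k := by
  unfold w; positivity

lemma w_le_one (hp0 : 0 < p) (k : ℕ) : w p k ≤ 1 := by
  unfold w
  apply Real.rpow_le_one_of_one_le_of_nonpos
  · have : (0:ℝ) ≤ (k:ℝ) := Nat.cast_nonneg k
    linarith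
  · linarith

lemma f_pos {m : ℕ} (hm : 1 ≤ m) : 0 < f p qh m := by
  unfold f
  have : (0:ℝ) < (m:ℝ) := by exact_mod_cast hm
  positivity

lemma f_one : f p qh 1 = 1 := by
  unfold f s
  norm_num

lemma s_succ (j : ℕ) (hj : 1 ≤ j) : s p j = s p (j-1) + w p j := by
  obtain ⟨j, rfl⟩ := Nat.exists_eq_add_of_le hj
  unfold s
  rw [Nat.add_comm 1 j, Nat.add_sub_cancel]
  exact Finset.sum_Icc_succ_top (by omega) _

lemma f_succ (j : ℕ) (hj : 1 ≤ j) : f p qh (j+1) = f p qh j * ρ p qh j := by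
  have hj0 : (0:ℝ) < (j:ℝ) := by exact_mod_cast hj
  unfold f ρ
  rw [Nat.add_sub_cancel, s_succ j hj]
  rw [show -qh * (s p (j-1) + w p j) = (-qh * s p (j-1)) + (-qh * w p j) by ring,
    Real.exp_add]
  have hcast : ((j:ℝ)+1) = ((j+1 : ℕ) : ℝ) := by push_cast; ring
  have hpow : (((j:ℝ)+1)/j)^p * (j:ℝ)^p = ((j:ℝ)+1)^p := by
    rw [← Real.mul_rpow (by positivity) hj0.le, div_mul_cancel₀ _ hj0.ne']
  rw [← hcast]
  rw [← hpow]; ring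

lemma ratio_iff (hp0 : 0 < p) (j : ℕ) (hj : 1 ≤ j) :
    1 ≤ ρ p qh j ↔ qh ≤ (Real.log ((j:ℝ)+1) - Real.log j) * ((j:ℝ)+1)^p * p := by
  have hj0 : (0:ℝ) < (j:ℝ) := by exact_mod_cast hj
  have hj1 : (0:ℝ) < (j:ℝ)+1 := by linarith
  have hE : (0:ℝ) < ((j:ℝ)+1)^p := Real.rpow_pos_of_pos hj1 p
  have hEw : w p j * ((j:ℝ)+1)^p = 1 := by
    unfold w
    rw [← Real.rpow_add hj1]
    simp
  unfold ρ
  rw [Real.rpow_def_of_pos (by positivity), Real.log_div hj1.ne' hj0.ne',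
    ← Real.exp_add, Real.one_le_exp_iff]
  set A := Real.log ((j:ℝ)+1) - Real.log j
  have hwj := w_pos p j
  constructor
  · intro h
    have h2 := mul_nonneg h hE.le
    have h3 : (A * p + -qh * w p j) * (((j:ℝ)+1)^p)
        = A * (((j:ℝ)+1)^p) * p - qh * (w p j * (((j:ℝ)+1)^p)) := by ring
    rw [hEw] at h3
    linarith [h3 ▸ h2]
  · intro h
    have h4 := mul_le_mul_of_nonneg_right h hwj.le
    have h5 : A * (((j:ℝ)+1)^p) * p * w p j = A * p * (w p j * (((j:ℝ)+1)^p)) := by ring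
    rw [hEw, mul_one] at h5
    linarith [h5 ▸ h4]

lemma ratio_mono (hp0 : 0 < p) (hp1 : p < 1) (hq : 0 < qh) {l j : ℕ}
    (hl : 1 ≤ l) (hlj : l ≤ j) (hrj : 1 ≤ ρ p qh j) : 1 ≤ ρ p qh l := by
  have hj : 1 ≤ j := le_trans hl hlj
  rw [ratio_iff hp0 j hj] at hrj
  rw [ratio_iff hp0 l hl]
  have hmem_l : ((l:ℝ)) ∈ Set.Ici (1:ℝ) := by
    simp only [Set.mem_Ici]; exact_mod_cast hl
  have hmem_j : ((j:ℝ)) ∈ Set.Ici (1:ℝ) := by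
    simp only [Set.mem_Ici]; exact_mod_cast hj
  have hg := g_anti p hp0 hp1 hmem_l hmem_j (by exact_mod_cast hlj)
  simp only at hg
  calc qh ≤ (Real.log ((j:ℝ)+1) - Real.log j) * ((j:ℝ)+1)^p * p := hrj
    _ ≤ (Real.log ((l:ℝ)+1) - Real.log l) * ((l:ℝ)+1)^p * p :=
        mul_le_mul_of_nonneg_right hg hp0.le

lemma f_mono_up (hq : 0 < qh) {m : ℕ} (hm : 1 ≤ m)
    (hρ : ∀ l, 1 ≤ l → l < m → 1 ≤ ρ p qh l) : 1 ≤ f p qh m := by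
  induction m with
  | zero => omega
  | succ m ih =>
    rcases Nat.eq_or_lt_of_le hm with h | h
    · rw [← h, f_one]
    · have hm1 : 1 ≤ m := by omega
      have ihm : 1 ≤ f p qh m := ih hm1 (fun l hl hlm => hρ l hl (by omega))
      have hρm : 1 ≤ ρ p qh m := hρ m hm1 (by omega)
      rw [f_succ m hm1]
      nlinarith

lemma f_mono_down {m n : ℕ} (hm : 1 ≤ m) (hmn : m ≤ n)
    (hρ : ∀ j, m ≤ j → j < n → ρ p qh j ≤ 1) : f p qh n ≤ f p qh m := by
  induction n with
  | zero => omega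
  | succ n ih =>
    rcases Nat.eq_or_lt_of_le hmn with h | h
    · rw [h]
    · have hmn' : m ≤ n := by omega
      have ihn : f p qh n ≤ f p qh m := ih hmn' (fun j hj hjn => hρ j hj (by omega))
      have hρn : ρ p qh n ≤ 1 := hρ n hmn' (by omega)
      have hfn : 0 < f p qh n := f_pos (le_trans hm hmn')
      rw [f_succ n (le_trans hm hmn')]
      nlinarith

end Stmt7Aux

open Stmt7Aux

/-- Lemma `an bn upper bounds`.
Let `p ∈ (0,1)` and `q̂ > 0`.  Let `K ≥ 1` be such that
`exp (−q̂ Σ_{k=1}^{n−1} (k+1)^{−p}) ≤ n^{−p}` for all `n ≥ K`, and set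
`C := max_{1 ≤ i ≤ K} i^p exp (−q̂ Σ_{k=1}^{i−1} (k+1)^{−p})`.  Then for all `n ≥ 1`,
`c_n := Σ_{i=0}^{n−1} (i+1)^{−2p} exp (−2q̂ Σ_{k=i+1}^{n−1} (k+1)^{−p})`
satisfies `c_n ≤ (C e^{q̂} / q̂) n^{−p}`. -/
theorem stmt7 (p qh : ℝ) (hp0 : 0 < p) (hp1 : p < 1) (hq : 0 < qh)
    (K : ℕ) (hK : 1 ≤ K)
    (hKprop : ∀ n : ℕ, K ≤ n →
      Real.exp (-qh * ∑ k ∈ Finset.Icc 1 (n - 1), ((k : ℝ) + 1) ^ (-p)) ≤ (n : ℝ) ^ (-p))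
    (C : ℝ)
    (hC : C = (Finset.Icc 1 K).sup' (Finset.nonempty_Icc.mpr hK)
      (fun i : ℕ => (i : ℝ) ^ p *
        Real.exp (-qh * ∑ k ∈ Finset.Icc 1 (i - 1), ((k : ℝ) + 1) ^ (-p)))) :
    ∀ n : ℕ, 1 ≤ n →
      ∑ i ∈ Finset.range n, ((i : ℝ) + 1) ^ (-(2 * p)) *
          Real.exp (-(2 * qh) * ∑ k ∈ Finset.Icc (i + 1) (n - 1), ((k : ℝ) + 1) ^ (-p))
        ≤ C * Real.exp qh / qh * (n : ℝ) ^ (-p) := by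
  -- basic C facts
  have hsup : ∀ i ∈ Finset.Icc 1 K, f p qh i ≤ C := by
    intro i hi
    rw [hC]
    exact Finset.le_sup' (fun i : ℕ => (i : ℝ) ^ p *
      Real.exp (-qh * ∑ k ∈ Finset.Icc 1 (i - 1), ((k : ℝ) + 1) ^ (-p))) hi
  have hC1 : (1:ℝ) ≤ C := by
    have := hsup 1 (by simp [hK])
    rwa [f_one] at this
  have hfC : ∀ n : ℕ, 1 ≤ n → f p qh n ≤ C := by
    intro n hn
    by_cases hnK : n ≤ K
    · exact hsup n (Finset.mem_Icc.mpr ⟨hn, hnK⟩)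
    · push_neg at hnK
      have hKp := hKprop n (le_of_lt hnK)
      have hnpos : (0:ℝ) < (n:ℝ) := by exact_mod_cast hn
      have h1 : (n:ℝ)^p * (n:ℝ)^(-p) = 1 := by
        rw [← Real.rpow_add hnpos]; simp
      have : f p qh n ≤ (n:ℝ)^p * (n:ℝ)^(-p) := by
        unfold f s w
        exact mul_le_mul_of_nonneg_left hKp (Real.rpow_nonneg hnpos.le p)
      rw [h1] at this
      linarith
  -- the key almost-monotonicity
  have key : ∀ m n : ℕ, 1 ≤ m → m ≤ n → f p qh n ≤ C * f p qh m := by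
    intro m n hm hmn
    by_cases hall : ∀ j, m ≤ j → j < n → ρ p qh j ≤ 1
    · have h1 := f_mono_down hm hmn hall
      have h2 : 0 < f p qh m := f_pos hm
      nlinarith
    · push_neg at hall
      obtain ⟨j, hmj, hjn, hρj⟩ := hall
      have hup : 1 ≤ f p qh m := by
        apply f_mono_up hq hm
        intro l hl hlm
        exact ratio_mono hp0 hp1 hq hl (by omega) hρj.le
      have hdn : f p qh n ≤ C := hfC n (by omega)
      nlinarith
  intro n hn
  -- telescoping setup
  set F : ℕ → ℝ := fun j => Real.exp (-qh * ∑ k ∈ Finset.Icc j (n-1), w p k) with hF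
  have hFpos : ∀ j, 0 < F j := fun j => Real.exp_pos _
  have hFn : F n = 1 := by
    rw [hF]
    simp [Finset.Icc_eq_empty (by omega : ¬ n ≤ n - 1)]
  have hFstep : ∀ i, i < n → F i = F (i+1) * Real.exp (-(qh * w p i)) := by
    intro i hi
    have hset : Finset.Icc i (n-1) = insert i (Finset.Icc (i+1) (n-1)) := by
      ext x; simp only [Finset.mem_Icc, Finset.mem_insert]; omega
    rw [hF]
    simp only
    rw [hset, Finset.sum_insert (by simp)]
    rw [show -qh * (w p i + ∑ k ∈ Finset.Icc (i+1) (n-1), w p k)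
        = (-qh * ∑ k ∈ Finset.Icc (i+1) (n-1), w p k) + (-(qh * w p i)) by ring,
      Real.exp_add]
  have tele_term : ∀ i, i < n → w p i * F (i+1) ≤ Real.exp qh / qh * (F (i+1) - F i) := by
    intro i hi
    rw [hFstep i hi]
    set x := qh * w p i with hx
    have hwpos := w_pos p i
    have hx0 : 0 < x := by positivity
    have hxq : x ≤ qh := by
      have := w_le_one hp0 i
      nlinarith
    have h1 : x * Real.exp (-x) ≤ 1 - Real.exp (-x) := by
      have h2 := Real.add_one_le_exp x
      have h3 := mul_le_mul_of_nonneg_right h2 (Real.exp_pos (-x)).le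
      rw [← Real.exp_add] at h3
      simp at h3
      linarith
    have h4 : Real.exp (-qh) ≤ Real.exp (-x) := Real.exp_le_exp.mpr (by linarith)
    have h5 : x * Real.exp (-qh) ≤ 1 - Real.exp (-x) := by nlinarith
    rw [div_mul_eq_mul_div, le_div_iff₀ hq]
    have hexp1 : Real.exp qh * Real.exp (-qh) = 1 := by
      rw [← Real.exp_add]; simp
    have hint := mul_le_mul_of_nonneg_left h5
      (by positivity : (0:ℝ) ≤ Real.exp qh * F (i+1))
    have heq : Real.exp qh * F (i+1) * (x * Real.exp (-qh)) = F (i+1) * x := by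
      rw [show Real.exp qh * F (i+1) * (x * Real.exp (-qh))
        = (Real.exp qh * Real.exp (-qh)) * (F (i+1) * x) from by ring, hexp1, one_mul]
    have heq2 : w p i * F (i+1) * qh = F (i+1) * x := by rw [hx]; ring
    nlinarith [hFpos (i+1)]
  have tele_sum : ∑ i ∈ Finset.range n, w p i * F (i+1) ≤ Real.exp qh / qh := by
    calc ∑ i ∈ Finset.range n, w p i * F (i+1)
        ≤ ∑ i ∈ Finset.range n, Real.exp qh / qh * (F (i+1) - F i) :=
          Finset.sum_le_sum (fun i hi => tele_term i (Finset.mem_range.mp hi))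
      _ = Real.exp qh / qh * ∑ i ∈ Finset.range n, (F (i+1) - F i) := by
          rw [Finset.mul_sum]
      _ = Real.exp qh / qh * (F n - F 0) := by rw [Finset.sum_range_sub]
      _ ≤ Real.exp qh / qh * 1 := by
          apply mul_le_mul_of_nonneg_left _ (by positivity)
          have := hFpos 0
          rw [hFn]; linarith
      _ = Real.exp qh / qh := mul_one _
  -- sup bound
  have sup_bound : ∀ i, i < n → w p i * F (i+1) ≤ C * (n:ℝ)^(-p) := by
    intro i hi
    have hkey := key (i+1) n (by omega) (by omega)
    have hsplit : s p (n-1) = s p i + ∑ k ∈ Finset.Icc (i+1) (n-1), w p k := by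
      unfold s
      rw [show Finset.Icc 1 (n-1) = Finset.Ioc 0 (n-1) from Finset.Icc_add_one_left_eq_Ioc 0 (n-1),
        show Finset.Icc 1 i = Finset.Ioc 0 i from Finset.Icc_add_one_left_eq_Ioc 0 i,
        show Finset.Icc (i+1) (n-1) = Finset.Ioc i (n-1) from Finset.Icc_add_one_left_eq_Ioc i (n-1)]
      exact (Finset.sum_Ioc_consecutive _ (Nat.zero_le i) (by omega)).symm
    have hnpos : (0:ℝ) < (n:ℝ) := by exact_mod_cast hn
    have hipos : (0:ℝ) < (i:ℝ) + 1 := by positivity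
    set e := Real.exp (-qh * s p i) with he
    have hepos : 0 < e := Real.exp_pos _
    have hfn : f p qh n = (n:ℝ)^p * (e * F (i+1)) := by
      unfold f
      rw [hsplit, hF]
      simp only
      rw [show -qh * (s p i + ∑ k ∈ Finset.Icc (i+1) (n-1), w p k)
        = (-qh * s p i) + (-qh * ∑ k ∈ Finset.Icc (i+1) (n-1), w p k) by ring,
        Real.exp_add]
    have hfm : f p qh (i+1) = ((i:ℝ)+1)^p * e := by
      unfold f
      rw [Nat.add_sub_cancel, ← he]
      push_cast
      ring
    rw [hfn, hfm] at hkey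
    -- divide by e
    have h2 : (n:ℝ)^p * F (i+1) ≤ C * ((i:ℝ)+1)^p := by
      have h3 := mul_le_mul_of_nonneg_right hkey (by positivity : (0:ℝ) ≤ e⁻¹)
      have he1 : e * e⁻¹ = 1 := mul_inv_cancel₀ hepos.ne'
      have hL2 : (n:ℝ)^p * (e * F (i+1)) * e⁻¹ = (n:ℝ)^p * F (i+1) := by
        rw [show (n:ℝ)^p * (e * F (i+1)) * e⁻¹
          = ((n:ℝ)^p * F (i+1)) * (e * e⁻¹) from by ring, he1, mul_one]
      have hR2 : C * (((i:ℝ)+1)^p * e) * e⁻¹ = C * ((i:ℝ)+1)^p := by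
        rw [show C * (((i:ℝ)+1)^p * e) * e⁻¹
          = (C * ((i:ℝ)+1)^p) * (e * e⁻¹) from by ring, he1, mul_one]
      linarith [h3, hL2 ▸ hR2 ▸ h3]
    have haa : ((i:ℝ)+1)^p * ((i:ℝ)+1)^(-p) = 1 := by
      rw [← Real.rpow_add hipos]; simp
    have hbb : (n:ℝ)^p * (n:ℝ)^(-p) = 1 := by
      rw [← Real.rpow_add hnpos]; simp
    have hF1 := hFpos (i+1)
    have ha'pos : (0:ℝ) < ((i:ℝ)+1)^(-p) := Real.rpow_pos_of_pos hipos _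
    have hb'pos : (0:ℝ) < (n:ℝ)^(-p) := Real.rpow_pos_of_pos hnpos _
    have h4 := mul_le_mul_of_nonneg_right h2
      (by positivity : (0:ℝ) ≤ ((i:ℝ)+1)^(-p) * (n:ℝ)^(-p))
    have hwi : w p i = ((i:ℝ)+1)^(-p) := rfl
    rw [hwi]
    have hL : (n:ℝ)^p * F (i+1) * (((i:ℝ)+1)^(-p) * (n:ℝ)^(-p))
        = ((i:ℝ)+1)^(-p) * F (i+1) := by
      rw [show (n:ℝ)^p * F (i+1) * (((i:ℝ)+1)^(-p) * (n:ℝ)^(-p))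
        = ((n:ℝ)^p * (n:ℝ)^(-p)) * (((i:ℝ)+1)^(-p) * F (i+1)) from by ring, hbb, one_mul]
    have hR : C * ((i:ℝ)+1)^p * (((i:ℝ)+1)^(-p) * (n:ℝ)^(-p)) = C * (n:ℝ)^(-p) := by
      rw [show C * ((i:ℝ)+1)^p * (((i:ℝ)+1)^(-p) * (n:ℝ)^(-p))
        = (((i:ℝ)+1)^p * ((i:ℝ)+1)^(-p)) * (C * (n:ℝ)^(-p)) from by ring, haa, one_mul]
    linarith [h4, hL ▸ hR ▸ h4]
  -- final assembly
  have termEq : ∀ i : ℕ, ((i:ℝ)+1)^(-(2*p)) *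
      Real.exp (-(2*qh) * ∑ k ∈ Finset.Icc (i + 1) (n - 1), ((k : ℝ) + 1) ^ (-p))
      = (w p i * F (i+1)) * (w p i * F (i+1)) := by
    intro i
    have h1 : ((i:ℝ)+1)^(-(2*p)) = w p i * w p i := by
      unfold w
      rw [show -(2*p) = (-p) + (-p) by ring, Real.rpow_add (by positivity)]
    have h2 : Real.exp (-(2*qh) * ∑ k ∈ Finset.Icc (i + 1) (n - 1), ((k : ℝ) + 1) ^ (-p))
        = F (i+1) * F (i+1) := by
      rw [hF]
      simp only
      rw [show ∀ T : ℝ, -(2*qh) * T = (-qh*T) + (-qh*T) from fun T => by ring,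
        Real.exp_add]
      rfl
    rw [h1, h2]; ring
  have hCn : (0:ℝ) ≤ C * (n:ℝ)^(-p) := by
    have : (0:ℝ) < (n:ℝ) := by exact_mod_cast hn
    positivity
  calc ∑ i ∈ Finset.range n, ((i : ℝ) + 1) ^ (-(2 * p)) *
          Real.exp (-(2 * qh) * ∑ k ∈ Finset.Icc (i + 1) (n - 1), ((k : ℝ) + 1) ^ (-p))
      = ∑ i ∈ Finset.range n, (w p i * F (i+1)) * (w p i * F (i+1)) := by
        exact Finset.sum_congr rfl (fun i _ => termEq i)
    _ ≤ ∑ i ∈ Finset.range n, (C * (n:ℝ)^(-p)) * (w p i * F (i+1)) := by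
        apply Finset.sum_le_sum
        intro i hi
        have hpos : 0 ≤ w p i * F (i+1) := le_of_lt (mul_pos (w_pos p i) (hFpos (i+1)))
        exact mul_le_mul_of_nonneg_right (sup_bound i (Finset.mem_range.mp hi)) hpos
    _ = (C * (n:ℝ)^(-p)) * ∑ i ∈ Finset.range n, w p i * F (i+1) := by
        rw [Finset.mul_sum]
    _ ≤ (C * (n:ℝ)^(-p)) * (Real.exp qh / qh) :=
        mul_le_mul_of_nonneg_left tele_sum hCn
    _ = C * Real.exp qh / qh * (n:ℝ)^(-p) := by ring
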